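/- Let (M,g̃) be a d-dimensional pseudo-Riemannian manifold with d ≥ 2, J a g̃-compatible almost-complex structure that is parallel with respect to the Levi-Civita connection ∇̃ of g̃ (Kähler condition). Let Ω be a smooth nowhere-vanishing function and g := Ω⁻²g̃. Then Z_{ab} := Ω⁻¹ J_{ab} (indices lowered with g) is a conformal Killing-Yano 2-form for g, i.e. ∇_{(a}Z_{b)c} = g_{ab}ξ_c - g_{c(a}ξ_{b)} where ξ_a = -(1/(d-1)) ∇_b Z_a{}^b and ∇ is the Levi-Civita connection of g. -/
import Mathlib

open Finset Matrix in
lemma aux_inv {d : ℕ} (g gInv : Fin d → Fin d → ℝ)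
    (hgsymm : ∀ a b, g a b = g b a)
    (hginv : ∀ a b, ∑ c, g a c * gInv c b = if a = b then (1:ℝ) else 0) :
    (∀ a b, ∑ c, gInv a c * g c b = if a = b then (1:ℝ) else 0) ∧
    (∀ a b, gInv a b = gInv b a) := by
  have h : (Matrix.of g) * (Matrix.of gInv) = 1 := by
    ext a b
    simpa [Matrix.mul_apply, Matrix.one_apply] using hginv a b
  have h2 : (Matrix.of gInv) * (Matrix.of g) = 1 := mul_eq_one_comm.mp h
  have hGsym : (Matrix.of g)ᵀ = Matrix.of g := by
    ext a b; exact hgsymm b a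
  have h3 : (Matrix.of g) * (Matrix.of gInv)ᵀ = 1 := by
    have := congrArg Matrix.transpose h2
    simpa [Matrix.transpose_mul, hGsym] using this
  have h4 : (Matrix.of gInv)ᵀ = Matrix.of gInv := by
    calc (Matrix.of gInv)ᵀ = ((Matrix.of gInv) * (Matrix.of g)) * (Matrix.of gInv)ᵀ := by
          rw [h2, Matrix.one_mul]
      _ = (Matrix.of gInv) * ((Matrix.of g) * (Matrix.of gInv)ᵀ) := by rw [Matrix.mul_assoc]
      _ = Matrix.of gInv := by rw [h3, Matrix.mul_one]
  constructor
  · intro a b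
    have := congrFun (congrFun h2 a) b
    simpa [Matrix.mul_apply, Matrix.one_apply] using this
  · intro a b
    exact congrFun (congrFun h4.symm a) b

open Finset in
lemma aux_anti {d : ℕ} (g : Fin d → Fin d → ℝ) (J : Fin d → Fin d → ℝ)
    (hgsymm : ∀ a b, g a b = g b a)
    (hJ2 : ∀ a b, ∑ c, J a c * J c b = -(if a = b then (1:ℝ) else 0))
    (hcompat : ∀ a b, ∑ c, ∑ e, J a c * J b e * g c e = g a b) :
    ∀ a b, (∑ e, J b e * g e a) = -∑ e, J a e * g e b := by
  intro a b
  calc ∑ e, J b e * g e a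
      = ∑ c, J b c * ∑ f, ∑ e, J c f * J a e * g f e := by
        refine Finset.sum_congr rfl fun c _ => ?_
        rw [hcompat c a]
    _ = ∑ c, ∑ f, ∑ e, J b c * (J c f * (J a e * g f e)) := by
        simp [Finset.mul_sum, mul_assoc]
    _ = ∑ f, ∑ e, ∑ c, J b c * (J c f * (J a e * g f e)) := by
        rw [Finset.sum_comm]
        exact Finset.sum_congr rfl fun f _ => Finset.sum_comm ..
    _ = ∑ f, ∑ e, (∑ c, J b c * J c f) * (J a e * g f e) := by
        refine Finset.sum_congr rfl fun f _ => Finset.sum_congr rfl fun e _ => ?_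
        rw [Finset.sum_mul]
        exact Finset.sum_congr rfl fun c _ => by ring
    _ = ∑ f, ∑ e, (-(if b = f then (1:ℝ) else 0)) * (J a e * g f e) := by
        refine Finset.sum_congr rfl fun f _ => Finset.sum_congr rfl fun e _ => ?_
        rw [hJ2 b f]
    _ = -∑ e, J a e * g e b := by
        rw [Finset.sum_comm]
        simp [hgsymm b]

/-- If the conformal class of a `d`-dimensional metric `g` contains a
Kähler metric `g̃ = Ω²g` (i.e. the compatible almost-complex structure `J` is parallel
for the Levi-Civita connection of `g̃`), then `Z_{ab} = Ω⁻¹ J_{ab}` is a conformal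
Killing-Yano 2-form for `g`.  All fields are represented pointwise by their components;
`DJ a b c = ∇_a J_b{}^c` denotes the Levi-Civita derivative of `J` with respect to `g`,
and the Kähler condition `∇̃J = 0` is expressed through the standard difference tensor
`K_a{}^b{}_c = δ_a{}^b Υ_c + δ_c{}^b Υ_a - g_{ac} Υ^b` between the two Levi-Civita
connections, with `Υ_a = Ω⁻¹ ∇_a Ω`. -/
theorem stmt_1 {d : ℕ} (hd : 2 ≤ d)
    (g gInv : Fin d → Fin d → ℝ)
    (J : Fin d → Fin d → ℝ)            -- J_a{}^b
    (Ω : ℝ) (hΩ : Ω ≠ 0)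
    (Υ : Fin d → ℝ)                    -- Υ_a = Ω⁻¹ ∇_a Ω
    (DJ : Fin d → Fin d → Fin d → ℝ)   -- DJ a b c = ∇_a J_b{}^c
    (hgsymm : ∀ a b, g a b = g b a)
    (hginv : ∀ a b, ∑ c, g a c * gInv c b = if a = b then (1:ℝ) else 0)
    (hJ2 : ∀ a b, ∑ c, J a c * J c b = -(if a = b then (1:ℝ) else 0))
    (hcompat : ∀ a b, ∑ c, ∑ e, J a c * J b e * g c e = g a b)
    (K : Fin d → Fin d → Fin d → ℝ)    -- K a b c = K_a{}^b{}_c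
    (hK : ∀ a b c, K a b c =
      (if a = b then Υ c else 0) + (if c = b then Υ a else 0)
        - g a c * ∑ e, gInv b e * Υ e)
    -- Kähler condition: ∇̃_a J_b{}^c = ∇_a J_b{}^c + K_a{}^c{}_e J_b{}^e - K_a{}^e{}_b J_e{}^c = 0
    (hKahler : ∀ a b c,
      DJ a b c + (∑ e, K a c e * J b e) - (∑ e, K a e b * J e c) = 0)
    -- Z_{ab} = Ω⁻¹ J_{ab} and its g-covariant derivative ∇_a Z_{bc}
    (Zlow : Fin d → Fin d → ℝ)
    (hZ : ∀ a b, Zlow a b = Ω⁻¹ * ∑ c, J a c * g c b)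
    (DZ : Fin d → Fin d → Fin d → ℝ)
    (hDZ : ∀ a b c, DZ a b c =
      Ω⁻¹ * (-(Υ a) * (∑ e, J b e * g e c) + ∑ e, DJ a b e * g e c))
    -- ξ_a = -(1/(d-1)) ∇_b Z_a{}^b
    (ξ : Fin d → ℝ)
    (hξ : ∀ a, ξ a = -(1 / ((d : ℝ) - 1)) * ∑ b, ∑ c, DZ b a c * gInv c b) :
    -- conformal Killing–Yano equation: ∇_{(a}Z_{b)c} = g_{ab} ξ_c - g_{c(a} ξ_{b)}
    ∀ a b c, (DZ a b c + DZ b a c) / 2 =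
      g a b * ξ c - (g c a * ξ b + g c b * ξ a) / 2 := by
  obtain ⟨hginv2, hginvs⟩ := aux_inv g gInv hgsymm hginv
  have hanti := aux_anti g J hgsymm hJ2 hcompat
  -- lowering the index of Υ-sharp
  have hlow : ∀ f, (∑ e, (∑ k, gInv e k * Υ k) * g e f) = Υ f := by
    intro f
    calc ∑ e, (∑ k, gInv e k * Υ k) * g e f
        = ∑ e, ∑ k, gInv k e * g e f * Υ k := by
          refine Finset.sum_congr rfl fun e _ => ?_
          rw [Finset.sum_mul]
          refine Finset.sum_congr rfl fun k _ => ?_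
          rw [hginvs e k]; ring
      _ = ∑ k, ∑ e, gInv k e * g e f * Υ k := Finset.sum_comm ..
      _ = ∑ k, (∑ e, gInv k e * g e f) * Υ k := by
          refine Finset.sum_congr rfl fun k _ => (Finset.sum_mul ..).symm
      _ = Υ f := by simp [hginv2]
  -- raising the second index of Jlow recovers J
  have hJup : ∀ a b, (∑ c, (∑ e, J a e * g e c) * gInv c b) = J a b := by
    intro a b
    calc ∑ c, (∑ e, J a e * g e c) * gInv c b
        = ∑ c, ∑ e, J a e * (g e c * gInv c b) := by
          refine Finset.sum_congr rfl fun c _ => ?_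
          rw [Finset.sum_mul]
          exact Finset.sum_congr rfl fun e _ => by ring
      _ = ∑ e, ∑ c, J a e * (g e c * gInv c b) := Finset.sum_comm ..
      _ = ∑ e, J a e * ∑ c, g e c * gInv c b := by
          refine Finset.sum_congr rfl fun e _ => (Finset.mul_sum ..).symm
      _ = J a b := by simp [hginv]
  -- closed form of DJ from the Kähler condition
  have hDJf : ∀ a b c, DJ a b c =
      Υ b * J a c - g a b * (∑ e, (∑ k, gInv e k * Υ k) * J e c)
      - (if a = c then (1:ℝ) else 0) * (∑ e, Υ e * J b e)
      + (∑ k, gInv c k * Υ k) * (∑ e, g a e * J b e) := by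
    intro a b c
    have h := hKahler a b c
    have e1 : (∑ e, K a c e * J b e) =
        (if a = c then (1:ℝ) else 0) * (∑ e, Υ e * J b e) + Υ a * J b c
          - (∑ k, gInv c k * Υ k) * (∑ e, g a e * J b e) := by
      simp only [hK]
      rw [Finset.sum_congr rfl (fun e _ => by split_ifs <;> ring :
        ∀ e ∈ Finset.univ, ((if a = c then Υ e else 0) + (if e = c then Υ a else 0)
          - g a e * ∑ k, gInv c k * Υ k) * J b e
        = (if a = c then (1:ℝ) else 0) * (Υ e * J b e)
          + (if e = c then Υ a * J b e else 0)
          - (∑ k, gInv c k * Υ k) * (g a e * J b e))]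
      rw [Finset.sum_sub_distrib, Finset.sum_add_distrib, Finset.sum_ite_eq' Finset.univ c]
      simp [Finset.mul_sum]
    have e2 : (∑ e, K a e b * J e c) =
        Υ b * J a c + Υ a * J b c
          - g a b * (∑ e, (∑ k, gInv e k * Υ k) * J e c) := by
      simp only [hK]
      rw [Finset.sum_congr rfl (fun e _ => by split_ifs <;> ring :
        ∀ e ∈ Finset.univ, ((if a = e then Υ b else 0) + (if b = e then Υ a else 0)
          - g a b * ∑ k, gInv e k * Υ k) * J e c
        = (if a = e then Υ b * J e c else 0) + (if b = e then Υ a * J e c else 0)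
          - g a b * ((∑ k, gInv e k * Υ k) * J e c))]
      rw [Finset.sum_sub_distrib, Finset.sum_add_distrib,
        Finset.sum_ite_eq Finset.univ a, Finset.sum_ite_eq Finset.univ b]
      simp [Finset.mul_sum]
    rw [e1, e2] at h
    linarith
  -- closed form of DZ
  have hDZf : ∀ a b c, DZ a b c =
      Ω⁻¹ * (-(Υ a) * (∑ e, J b e * g e c) + Υ b * (∑ e, J a e * g e c)
        + g a b * (∑ f, Υ f * J c f) - (∑ f, Υ f * J b f) * g a c
        - Υ c * (∑ e, J a e * g e b)) := by
    intro a b c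
    rw [hDZ a b c]
    have key : (∑ e, DJ a b e * g e c) =
        Υ b * (∑ e, J a e * g e c) + g a b * (∑ f, Υ f * J c f)
          - (∑ f, Υ f * J b f) * g a c - Υ c * (∑ e, J a e * g e b) := by
      rw [Finset.sum_congr rfl (fun e _ => by rw [hDJf a b e]; split_ifs <;> ring :
        ∀ e ∈ Finset.univ, DJ a b e * g e c
        = Υ b * (J a e * g e c)
          - g a b * ((∑ e', (∑ k, gInv e' k * Υ k) * J e' e) * g e c)
          - (if a = e then (∑ f, Υ f * J b f) * g e c else 0)
          + ((∑ k, gInv e k * Υ k) * g e c) * (∑ f, g a f * J b f))]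
      rw [Finset.sum_add_distrib, Finset.sum_sub_distrib, Finset.sum_sub_distrib,
        Finset.sum_ite_eq Finset.univ a]
      have t3 : (∑ e, (∑ e', (∑ k, gInv e' k * Υ k) * J e' e) * g e c)
          = -∑ f, Υ f * J c f := by
        calc ∑ e, (∑ e', (∑ k, gInv e' k * Υ k) * J e' e) * g e c
            = ∑ e, ∑ e', (∑ k, gInv e' k * Υ k) * (J e' e * g e c) := by
              refine Finset.sum_congr rfl fun e _ => ?_
              rw [Finset.sum_mul]
              exact Finset.sum_congr rfl fun e' _ => by ring
          _ = ∑ e', ∑ e, (∑ k, gInv e' k * Υ k) * (J e' e * g e c) := Finset.sum_comm ..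
          _ = ∑ e', (∑ k, gInv e' k * Υ k) * (∑ e, J e' e * g e c) := by
              refine Finset.sum_congr rfl fun e' _ => (Finset.mul_sum ..).symm
          _ = ∑ e', (∑ k, gInv e' k * Υ k) * (-∑ f, J c f * g f e') := by
              exact Finset.sum_congr rfl fun e' _ => by rw [hanti c e']
          _ = -∑ e', ∑ f, J c f * ((∑ k, gInv e' k * Υ k) * g e' f) := by
              rw [← Finset.sum_neg_distrib]
              refine Finset.sum_congr rfl fun e' _ => ?_
              rw [mul_neg, neg_inj, Finset.mul_sum]
              refine Finset.sum_congr rfl fun f _ => ?_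
              rw [hgsymm f e']
              ring
          _ = -∑ f, ∑ e', J c f * ((∑ k, gInv e' k * Υ k) * g e' f) := by
              rw [Finset.sum_comm]
          _ = -∑ f, J c f * (∑ e', (∑ k, gInv e' k * Υ k) * g e' f) := by
              rw [neg_inj]
              refine Finset.sum_congr rfl fun f _ => (Finset.mul_sum ..).symm
          _ = -∑ f, Υ f * J c f := by
              simp only [hlow]
              rw [neg_inj]
              exact Finset.sum_congr rfl fun f _ => by ring
      have t5 : (∑ e, ((∑ k, gInv e k * Υ k) * g e c) * (∑ f, g a f * J b f))
          = Υ c * (∑ f, g a f * J b f) := by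
        rw [← Finset.sum_mul, hlow c]
      have hU : (∑ f, g a f * J b f) = -∑ e, J a e * g e b := by
        calc ∑ f, g a f * J b f = ∑ f, J b f * g f a := by
              exact Finset.sum_congr rfl fun f _ => by rw [hgsymm a f]; ring
          _ = -∑ e, J a e * g e b := hanti a b
      simp only [Finset.mem_univ, if_true]
      rw [← Finset.mul_sum, ← Finset.mul_sum, t3, t5, hU]
      ring
    rw [key]
    ring
  -- trace of J vanishes
  have htrJ : (∑ b, J b b) = 0 := by
    have h1 : (∑ b, ∑ c, (∑ e, J b e * g e c) * gInv c b) = ∑ b, J b b :=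
      Finset.sum_congr rfl fun b _ => hJup b b
    have h2 : (∑ b, ∑ c, (∑ e, J b e * g e c) * gInv c b)
        = -∑ b, ∑ c, (∑ e, J b e * g e c) * gInv c b := by
      nth_rewrite 1 [Finset.sum_comm]
      rw [← Finset.sum_neg_distrib]
      refine Finset.sum_congr rfl fun b _ => ?_
      rw [← Finset.sum_neg_distrib]
      refine Finset.sum_congr rfl fun c _ => ?_
      rw [hanti b c, hginvs b c]
      ring
    rw [← h1]
    linarith
  -- ξ in closed form
  have hξf : ∀ a, ξ a = Ω⁻¹ * ∑ f, Υ f * J a f := by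
    intro a
    rw [hξ a]
    have key : (∑ b, ∑ c, DZ b a c * gInv c b)
        = Ω⁻¹ * ((1 : ℝ) - (d : ℝ)) * ∑ f, Υ f * J a f := by
      rw [Finset.sum_congr rfl (fun b _ => Finset.sum_congr rfl fun c _ => by
        rw [hDZf b a c]; ring :
        ∀ b ∈ Finset.univ, (∑ c, DZ b a c * gInv c b)
        = ∑ c, ((Ω⁻¹ * (-(Υ b)) * ((∑ e, J a e * g e c) * gInv c b)
            + Ω⁻¹ * Υ a * ((∑ e, J b e * g e c) * gInv c b)
            + Ω⁻¹ * (∑ f, Υ f * J c f) * (gInv c b * g b a))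
            - Ω⁻¹ * (∑ f, Υ f * J a f) * (g b c * gInv c b)
            - Ω⁻¹ * Υ c * ((∑ e, J b e * g e a) * gInv c b)))]
      simp only [Finset.sum_add_distrib, Finset.sum_sub_distrib]
      have T1 : (∑ b, ∑ c, Ω⁻¹ * (-(Υ b)) * ((∑ e, J a e * g e c) * gInv c b))
          = -(Ω⁻¹ * ∑ f, Υ f * J a f) := by
        calc ∑ b, ∑ c, Ω⁻¹ * (-(Υ b)) * ((∑ e, J a e * g e c) * gInv c b)
            = ∑ b, Ω⁻¹ * (-(Υ b)) * ∑ c, (∑ e, J a e * g e c) * gInv c b := by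
              refine Finset.sum_congr rfl fun b _ => (Finset.mul_sum ..).symm
          _ = ∑ b, Ω⁻¹ * (-(Υ b)) * J a b := by
              exact Finset.sum_congr rfl fun b _ => by rw [hJup a b]
          _ = -(Ω⁻¹ * ∑ f, Υ f * J a f) := by
              rw [Finset.mul_sum, ← Finset.sum_neg_distrib]
              exact Finset.sum_congr rfl fun b _ => by ring
      have T2 : (∑ b, ∑ c, Ω⁻¹ * Υ a * ((∑ e, J b e * g e c) * gInv c b)) = 0 := by
        calc ∑ b, ∑ c, Ω⁻¹ * Υ a * ((∑ e, J b e * g e c) * gInv c b)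
            = ∑ b, Ω⁻¹ * Υ a * ∑ c, (∑ e, J b e * g e c) * gInv c b := by
              refine Finset.sum_congr rfl fun b _ => (Finset.mul_sum ..).symm
          _ = ∑ b, Ω⁻¹ * Υ a * J b b := by
              exact Finset.sum_congr rfl fun b _ => by rw [hJup b b]
          _ = Ω⁻¹ * Υ a * ∑ b, J b b := (Finset.mul_sum ..).symm
          _ = 0 := by rw [htrJ, mul_zero]
      have T3 : (∑ b, ∑ c, Ω⁻¹ * (∑ f, Υ f * J c f) * (gInv c b * g b a))
          = Ω⁻¹ * ∑ f, Υ f * J a f := by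
        calc ∑ b, ∑ c, Ω⁻¹ * (∑ f, Υ f * J c f) * (gInv c b * g b a)
            = ∑ c, ∑ b, Ω⁻¹ * (∑ f, Υ f * J c f) * (gInv c b * g b a) := Finset.sum_comm ..
          _ = ∑ c, Ω⁻¹ * (∑ f, Υ f * J c f) * ∑ b, gInv c b * g b a := by
              refine Finset.sum_congr rfl fun c _ => (Finset.mul_sum ..).symm
          _ = ∑ c, Ω⁻¹ * (∑ f, Υ f * J c f) * (if c = a then (1:ℝ) else 0) := by
              exact Finset.sum_congr rfl fun c _ => by rw [hginv2 c a]
          _ = Ω⁻¹ * ∑ f, Υ f * J a f := by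
              rw [Finset.sum_congr rfl (fun c _ => by split_ifs with h <;> simp [h] :
                ∀ c ∈ Finset.univ, Ω⁻¹ * (∑ f, Υ f * J c f) * (if c = a then (1:ℝ) else 0)
                  = if c = a then Ω⁻¹ * (∑ f, Υ f * J c f) else 0)]
              rw [Finset.sum_ite_eq' Finset.univ a]
              simp
      have T4 : (∑ b, ∑ c, Ω⁻¹ * (∑ f, Υ f * J a f) * (g b c * gInv c b))
          = (d : ℝ) * (Ω⁻¹ * ∑ f, Υ f * J a f) := by
        calc ∑ b, ∑ c, Ω⁻¹ * (∑ f, Υ f * J a f) * (g b c * gInv c b)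
            = ∑ b, Ω⁻¹ * (∑ f, Υ f * J a f) * ∑ c, g b c * gInv c b := by
              refine Finset.sum_congr rfl fun b _ => (Finset.mul_sum ..).symm
          _ = ∑ b : Fin d, Ω⁻¹ * (∑ f, Υ f * J a f) * 1 := by
              refine Finset.sum_congr rfl fun b _ => by rw [hginv b b]; simp
          _ = (d : ℝ) * (Ω⁻¹ * ∑ f, Υ f * J a f) := by
              rw [Finset.sum_const, Finset.card_univ, Fintype.card_fin]
              simp [nsmul_eq_mul]
      have T5 : (∑ b, ∑ c, Ω⁻¹ * Υ c * ((∑ e, J b e * g e a) * gInv c b))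
          = -(Ω⁻¹ * ∑ f, Υ f * J a f) := by
        calc ∑ b, ∑ c, Ω⁻¹ * Υ c * ((∑ e, J b e * g e a) * gInv c b)
            = ∑ c, ∑ b, Ω⁻¹ * Υ c * ((∑ e, J b e * g e a) * gInv c b) := Finset.sum_comm ..
          _ = ∑ c, ∑ b, Ω⁻¹ * Υ c * (-((∑ e, J a e * g e b) * gInv b c)) := by
              refine Finset.sum_congr rfl fun c _ => Finset.sum_congr rfl fun b _ => ?_
              rw [hanti a b, hginvs c b]; ring
          _ = -∑ c, Ω⁻¹ * Υ c * ∑ b, (∑ e, J a e * g e b) * gInv b c := by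
              rw [← Finset.sum_neg_distrib]
              refine Finset.sum_congr rfl fun c _ => ?_
              rw [Finset.mul_sum, ← Finset.sum_neg_distrib]
              exact Finset.sum_congr rfl fun b _ => by ring
          _ = -∑ c, Ω⁻¹ * Υ c * J a c := by
              rw [neg_inj]
              exact Finset.sum_congr rfl fun c _ => by rw [hJup a c]
          _ = -(Ω⁻¹ * ∑ f, Υ f * J a f) := by
              rw [neg_inj, Finset.mul_sum]
              exact Finset.sum_congr rfl fun c _ => by ring
      rw [T1, T2, T3, T4, T5]
      ring
    rw [key]
    have hdne : ((d : ℝ) - 1) ≠ 0 := by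
      have : (2 : ℝ) ≤ (d : ℝ) := by exact_mod_cast hd
      linarith
    field_simp
    ring
  intro a b c
  rw [hDZf a b c, hDZf b a c, hξf a, hξf b, hξf c,
    hanti a b, hgsymm b a, hgsymm c a, hgsymm c b]
  ring
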